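/- There exist a constant c > 0 and a threshold n₀ such that for all n ≥ n₀, the number T_n of isomorphism classes of circle-trapezoid graphs on n vertices satisfies log₂ T_n ≥ 3n·log₂ n − c·n·log₂ log₂ n. -/

import Mathlib

/-- The setoid on graphs on `Fin n` satisfying a property `P`, identifying isomorphic graphs. -/
def graphIsoSetoid (n : ℕ) (P : SimpleGraph (Fin n) → Prop) :
    Setoid {G : SimpleGraph (Fin n) // P G} where
  r G H := Nonempty (G.val ≃g H.val)
  iseqv := ⟨fun _ => ⟨SimpleGraph.Iso.refl⟩, fun ⟨e⟩ => ⟨e.symm⟩,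
    fun ⟨e⟩ ⟨f⟩ => ⟨e.trans f⟩⟩

/-- The number of isomorphism classes of graphs on `Fin n` satisfying `P`. -/
noncomputable def numIsoClasses (n : ℕ) (P : SimpleGraph (Fin n) → Prop) : ℕ :=
  Nat.card (Quotient (graphIsoSetoid n P))

/-- The point of the unit circle with angle `θ`. -/
noncomputable def unitCirclePt (θ : ℝ) : ℝ × ℝ := (Real.cos θ, Real.sin θ)

/-- `A` is a closed arc of the unit circle. -/
def IsClosedArc (A : Set (ℝ × ℝ)) : Prop :=
  ∃ α β : ℝ, α ≤ β ∧ β - α < 2 * Real.pi ∧ A = unitCirclePt '' Set.Icc α β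

/-- `T` is a circle trapezoid: the convex hull of the union of two disjoint closed arcs of the
unit circle. -/
def IsCircleTrapezoid (T : Set (ℝ × ℝ)) : Prop :=
  ∃ A₁ A₂ : Set (ℝ × ℝ), IsClosedArc A₁ ∧ IsClosedArc A₂ ∧ Disjoint A₁ A₂ ∧
    T = convexHull ℝ (A₁ ∪ A₂)

/-- `G` is a circle-trapezoid graph: an intersection graph of circle trapezoids. -/
def IsCircleTrapezoidGraph {n : ℕ} (G : SimpleGraph (Fin n)) : Prop :=
  ∃ CT : Fin n → Set (ℝ × ℝ), (∀ v, IsCircleTrapezoid (CT v)) ∧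
    ∀ u v : Fin n, u ≠ v → (G.Adj u v ↔ (CT u ∩ CT v).Nonempty)

noncomputable section
open Real Set

namespace CTaux

lemma pt_add_two_pi (x : ℝ) : unitCirclePt (x + 2*π) = unitCirclePt x := by
  unfold unitCirclePt
  rw [Real.cos_add_two_pi, Real.sin_add_two_pi]

lemma pt_eq_iff {x y : ℝ} (h : unitCirclePt x = unitCirclePt y) :
    ∃ k : ℤ, x = y + k * (2*π) := by
  have hc : Real.cos x = Real.cos y := congrArg Prod.fst h
  have hs : Real.sin x = Real.sin y := congrArg Prod.snd h
  have hexp : Complex.exp (x * Complex.I) = Complex.exp (y * Complex.I) := by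
    rw [Complex.exp_mul_I, Complex.exp_mul_I]
    have h1 : (Complex.cos x) = (Complex.cos y) := by
      rw [← Complex.ofReal_cos, ← Complex.ofReal_cos, hc]
    have h2 : (Complex.sin x) = (Complex.sin y) := by
      rw [← Complex.ofReal_sin, ← Complex.ofReal_sin, hs]
    rw [h1, h2]
  rw [Complex.exp_eq_exp_iff_exists_int] at hexp
  obtain ⟨k, hk⟩ := hexp
  refine ⟨k, ?_⟩
  have hI : (Complex.I : ℂ) ≠ 0 := Complex.I_ne_zero
  have h2 : ((x : ℂ)) = ((y : ℝ) : ℂ) + (k : ℂ) * (2*π) := by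
    apply mul_right_cancel₀ hI
    rw [hk]; ring
  have h3 := congrArg Complex.re h2
  simpa using h3

lemma image_shift (a b : ℝ) :
    unitCirclePt '' Icc a b = unitCirclePt '' Icc (a + 2*π) (b + 2*π) := by
  rw [← Set.image_add_const_Icc (2*π) a b, Set.image_image]
  exact (Set.image_congr fun x _ => (pt_add_two_pi x).symm)

/-- arcs at disjoint angle ranges within a window of length < 2π are disjoint. -/
lemma arc_disjoint {s₁ s₂ s₃ s₄ : ℝ} (h23 : s₂ < s₃) (h41 : s₄ < s₁ + 2*π) :
    Disjoint (unitCirclePt '' Icc s₁ s₂) (unitCirclePt '' Icc s₃ s₄) := by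
  rw [Set.disjoint_left]
  rintro p ⟨u, hu, rfl⟩ ⟨w, hw, hpw⟩
  obtain ⟨k, hk⟩ := pt_eq_iff hpw
  have hπ := Real.pi_pos
  have h1 : w - u ≥ s₃ - s₂ := by have := hu.2; have := hw.1; linarith
  have h2 : w - u ≤ s₄ - s₁ := by have := hu.1; have := hw.2; linarith
  have hwu : w - u = k * (2*π) := by rw [hk]; ring
  have hk1 : (1:ℝ) ≤ (k:ℝ) := by
    by_contra hcon
    push_neg at hcon
    have : (k:ℝ) ≤ 0 := by
      have : k < 1 := by exact_mod_cast hcon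
      have : k ≤ 0 := by omega
      exact_mod_cast this
    nlinarith
  nlinarith

/-- the linear functional used for separation -/
def lf (μ : ℝ) (p : ℝ × ℝ) : ℝ := p.1 * Real.cos μ + p.2 * Real.sin μ

lemma lf_linear (μ : ℝ) : IsLinearMap ℝ (lf μ) := by
  constructor
  · intro p q; simp [lf]; ring
  · intro c p; simp [lf]; ring

lemma lf_pt (μ θ : ℝ) : lf μ (unitCirclePt θ) = Real.cos (θ - μ) := by
  simp [lf, unitCirclePt, Real.cos_sub]

/-- Separation: hull of arcs in the closed complement of a gap is disjoint from
hull of arcs strictly inside the gap. -/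
lemma sep {ga gb δ : ℝ} (hδ : 0 < δ) (hgap : ga + δ ≤ gb - δ) (hlen : gb - ga ≤ 2*π)
    {A B : Set (ℝ × ℝ)}
    (hA : A ⊆ unitCirclePt '' Icc gb (ga + 2*π))
    (hB : B ⊆ unitCirclePt '' Icc (ga + δ) (gb - δ)) :
    Disjoint (convexHull ℝ A) (convexHull ℝ B) := by
  have hπ := Real.pi_pos
  set μ := (ga + gb)/2 with hμ
  set d2 := (gb - ga)/2 with hd2
  have hd2pos : 0 < d2 := by simp only [hd2]; linarith
  have hd2le : d2 ≤ π := by simp only [hd2]; linarith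
  -- A side: lf μ ≤ cos d2
  have hAle : ∀ p ∈ A, lf μ p ≤ Real.cos d2 := by
    rintro p hp
    obtain ⟨θ, hθ, rfl⟩ := hA hp
    rw [lf_pt]
    have h1 : d2 ≤ θ - μ := by simp only [hd2, hμ]; have := hθ.1; linarith
    have h2 : θ - μ ≤ 2*π - d2 := by simp only [hd2, hμ]; have := hθ.2; linarith
    rcases le_total (θ - μ) π with hc | hc
    · exact Real.cos_le_cos_of_nonneg_of_le_pi (le_of_lt hd2pos) hc h1
    · have heq : Real.cos (θ - μ) = Real.cos (2*π - (θ - μ)) := by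
        rw [Real.cos_two_pi_sub]
      rw [heq]
      exact Real.cos_le_cos_of_nonneg_of_le_pi (le_of_lt hd2pos) (by linarith) (by linarith)
  -- B side: lf μ ≥ cos (d2 - δ)
  have hBge : ∀ p ∈ B, Real.cos (d2 - δ) ≤ lf μ p := by
    rintro p hp
    obtain ⟨θ, hθ, rfl⟩ := hB hp
    rw [lf_pt, ← Real.cos_abs (θ - μ)]
    have hb1 : -(d2 - δ) ≤ θ - μ := by simp only [hd2, hμ]; have := hθ.1; linarith
    have hb2 : θ - μ ≤ d2 - δ := by simp only [hd2, hμ]; have := hθ.2; linarith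
    have habs : |θ - μ| ≤ d2 - δ := abs_le.mpr ⟨hb1, hb2⟩
    exact Real.cos_le_cos_of_nonneg_of_le_pi (abs_nonneg _) (by linarith) habs
  have hstrict : Real.cos d2 < Real.cos (d2 - δ) := by
    apply Real.strictAntiOn_cos ⟨by linarith, by linarith⟩ ⟨by linarith, hd2le⟩
    linarith
  have hAhull : convexHull ℝ A ⊆ {p | lf μ p ≤ Real.cos d2} :=
    convexHull_min hAle (convex_halfSpace_le (lf_linear μ) _)
  have hBhull : convexHull ℝ B ⊆ {p | Real.cos (d2 - δ) ≤ lf μ p} :=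
    convexHull_min hBge (convex_halfSpace_ge (lf_linear μ) _)
  rw [Set.disjoint_left]
  intro p hpA hpB
  have := hAhull hpA
  have := hBhull hpB
  simp only [Set.mem_setOf_eq] at *
  linarith

section Params
variable (M : ℕ)

def st : ℝ := 2*π / M
def th (j : ℕ) : ℝ := j * st M
def dl : ℝ := st M / 4

def arcIcc (x y : ℝ) : Set (ℝ × ℝ) := unitCirclePt '' Icc x y

def probeSet (i : ℕ) : Set (ℝ × ℝ) :=
  convexHull ℝ (arcIcc (th M i + dl M) (th M i + dl M) ∪
    arcIcc (th M (i+1) - dl M) (th M (i+1) - dl M))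

def trapSet (a b c d : ℕ) : Set (ℝ × ℝ) :=
  convexHull ℝ (arcIcc (th M a) (th M (b+1)) ∪ arcIcc (th M c) (th M (d+1)))

lemma st_pos (hM : 8 ≤ M) : 0 < st M := by
  have := Real.pi_pos
  have hM0 : (0:ℝ) < M := by exact_mod_cast Nat.lt_of_lt_of_le (by norm_num) hM
  unfold st; positivity

lemma dl_st : 4 * dl M = st M := by unfold dl; ring

lemma dl_pos (hM : 8 ≤ M) : 0 < dl M := by
  have := st_pos M hM; unfold dl; linarith

lemma th_mono (hM : 8 ≤ M) {j k : ℕ} (h : j ≤ k) : th M j ≤ th M k := by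
  have hs := st_pos M hM
  unfold th
  have : (j:ℝ) ≤ k := by exact_mod_cast h
  nlinarith

lemma th_add_one (j : ℕ) : th M (j+1) = th M j + st M := by
  unfold th; push_cast; ring

lemma th_two_pi (hM : 8 ≤ M) : th M M = 2*π := by
  unfold th st
  have hM0 : (M:ℝ) ≠ 0 := by
    have : (0:ℝ) < M := by exact_mod_cast Nat.lt_of_lt_of_le (by norm_num) hM
    linarith
  field_simp

lemma th_le_two_pi (hM : 8 ≤ M) {j : ℕ} (h : j ≤ M) : th M j ≤ 2*π := by
  rw [← th_two_pi M hM]; exact th_mono M hM h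

lemma th_nonneg (hM : 8 ≤ M) (j : ℕ) : 0 ≤ th M j := by
  have := st_pos M hM; unfold th; positivity

lemma th_gap (hM : 8 ≤ M) {j k : ℕ} (h : j < k) : th M j + st M ≤ th M k := by
  have h1 := th_mono M hM (Nat.succ_le_of_lt h)
  rw [th_add_one] at h1; exact h1

lemma arcIcc_subset {a b lo hi : ℝ} (h1 : lo ≤ a) (h2 : b ≤ hi) :
    arcIcc a b ⊆ unitCirclePt '' Icc lo hi :=
  Set.image_mono (Set.Icc_subset_Icc h1 h2)

lemma arcIcc_shift (a b : ℝ) : arcIcc a b = arcIcc (a + 2*π) (b + 2*π) :=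
  image_shift a b

lemma probe_isCT (hM : 8 ≤ M) {i : ℕ} (hi : i < M) : IsCircleTrapezoid (probeSet M i) := by
  have hδ := dl_pos M hM
  have hs := st_pos M hM
  have hds := dl_st M
  have hπ := Real.pi_pos
  have h1 : th M i + dl M < th M (i+1) - dl M := by
    rw [th_add_one]; linarith
  refine ⟨_, _, ⟨_, _, le_refl _, by linarith, rfl⟩,
    ⟨_, _, le_refl _, by linarith, rfl⟩, ?_, rfl⟩
  apply arc_disjoint h1
  have h2 := th_le_two_pi M hM (Nat.succ_le_of_lt hi)
  have h3 := th_nonneg M hM i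
  linarith

lemma trap_isCT (hM : 8 ≤ M) {a b c d : ℕ} (hab : a ≤ b) (hbc : b + 2 ≤ c) (hcd : c ≤ d)
    (hd : d + 2 ≤ M) : IsCircleTrapezoid (trapSet M a b c d) := by
  have hs := st_pos M hM
  have hπ := Real.pi_pos
  have harc : ∀ j k : ℕ, j ≤ k → k < j + M → th M k - th M j < 2*π := by
    intro j k hjk hkM
    have h2 : (M:ℝ) * st M = 2*π := by
      rw [← th_two_pi M hM]; unfold th; ring
    have h3 : (k:ℝ) - j < M := by
      have : (k:ℝ) < j + M := by exact_mod_cast hkM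
      linarith
    unfold th
    calc (k:ℝ) * st M - j * st M = ((k:ℝ) - j) * st M := by ring
      _ < M * st M := by nlinarith
      _ = 2*π := h2
  refine ⟨_, _, ⟨_, _, th_mono M hM (by omega), harc a (b+1) (by omega) (by omega), rfl⟩,
    ⟨_, _, th_mono M hM (by omega), harc c (d+1) (by omega) (by omega), rfl⟩, ?_, rfl⟩
  apply arc_disjoint
  · have := th_gap M hM (show b+1 < c by omega); linarith
  · have h1 : th M (d+1) + st M ≤ th M M := th_gap M hM (by omega)
    rw [th_two_pi M hM] at h1
    have := th_nonneg M hM a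
    linarith

/-- The key adjacency characterization. -/
lemma probe_trap_inter (hM : 8 ≤ M) {a b c d i : ℕ} (hab : a ≤ b) (hbc : b + 2 ≤ c)
    (hcd : c ≤ d) (hd : d + 2 ≤ M) (hi : i < M) :
    (probeSet M i ∩ trapSet M a b c d).Nonempty ↔ ((a ≤ i ∧ i ≤ b) ∨ (c ≤ i ∧ i ≤ d)) := by
  have hs := st_pos M hM
  have hδ := dl_pos M hM
  have hds := dl_st M
  have hπ := Real.pi_pos
  constructor
  · -- contrapositive: if i is in a gap, sets are disjoint
    intro hne
    by_contra hcon
    push_neg at hcon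
    have hgapcase : i < a ∨ (b + 1 ≤ i ∧ i + 1 ≤ c) ∨ d + 1 ≤ i := by omega
    have h2pi : th M (d+1) + st M ≤ 2*π := by
      have := th_gap M hM (show d+1 < M by omega); rwa [th_two_pi M hM] at this
    have h2piI : th M (i+1) ≤ 2*π := th_le_two_pi M hM (by omega)
    have ha0 := th_nonneg M hM a
    have hb0 := th_nonneg M hM (b+1)
    have hcM : th M c ≤ 2*π := th_le_two_pi M hM (by omega)
    have hi0 := th_nonneg M hM i
    have hi10 := th_nonneg M hM (i+1)
    have hdisj : Disjoint (trapSet M a b c d) (probeSet M i) := by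
      rcases hgapcase with hlt | ⟨h1, h2⟩ | hgt
      · -- wrap gap, i < a
        refine sep (ga := th M (d+1)) (gb := th M a + 2*π) (dl_pos M hM) (by linarith) (by
            have := th_mono M hM (show a ≤ d+1 by omega); linarith) ?_ ?_
        · apply Set.union_subset
          · rw [arcIcc_shift]
            exact arcIcc_subset (le_refl _) (by
              have := th_mono M hM (show b+1 ≤ d+1 by omega); linarith)
          · rw [arcIcc_shift]
            exact arcIcc_subset (by have := th_mono M hM (show a ≤ c by omega); linarith)
              (le_refl _)
        · apply Set.union_subset
          · rw [arcIcc_shift]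
            apply arcIcc_subset
            · have h3 : th M (d+1) ≤ 2*π := by linarith
              have h4 : 0 ≤ th M i := th_nonneg M hM i
              linarith
            · have := th_gap M hM hlt; linarith
          · rw [arcIcc_shift]
            apply arcIcc_subset
            · linarith
            · have := th_mono M hM (show i+1 ≤ a by omega); linarith
      · -- middle gap
        refine sep (ga := th M (b+1)) (gb := th M c) (dl_pos M hM) (by
            have := th_gap M hM (show b+1 < c by omega); linarith) (by linarith) ?_ ?_
        · apply Set.union_subset
          · rw [arcIcc_shift]
            exact arcIcc_subset (by linarith) (le_refl _)
          · apply arcIcc_subset (le_refl _)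
            have := th_le_two_pi M hM (show d+1 ≤ M by omega); linarith
        · apply Set.union_subset
          · apply arcIcc_subset
            · have := th_mono M hM h1; linarith
            · have := th_gap M hM (show i < c by omega); linarith
          · apply arcIcc_subset
            · have := th_gap M hM (show b+1 < i+1 by omega); linarith
            · have := th_mono M hM h2; linarith
      · -- wrap gap, d < i
        refine sep (ga := th M (d+1)) (gb := th M a + 2*π) (dl_pos M hM) (by linarith) (by
            have := th_mono M hM (show a ≤ d+1 by omega); linarith) ?_ ?_
        · apply Set.union_subset
          · rw [arcIcc_shift]
            exact arcIcc_subset (le_refl _) (by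
              have := th_mono M hM (show b+1 ≤ d+1 by omega); linarith)
          · rw [arcIcc_shift]
            exact arcIcc_subset (by have := th_mono M hM (show a ≤ c by omega); linarith)
              (le_refl _)
        · apply Set.union_subset
          · apply arcIcc_subset
            · have := th_mono M hM (show d+1 ≤ i by omega); linarith
            · have := th_gap M hM (show i < M by omega)
              rw [th_two_pi M hM] at this; linarith
          · apply arcIcc_subset
            · have := th_gap M hM (show d+1 < i+1 by omega); linarith
            · linarith
    exfalso
    rw [Set.disjoint_right] at hdisj
    obtain ⟨p, hp1, hp2⟩ := hne
    exact hdisj hp1 hp2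
  · -- if i is hit, common point
    intro hhit
    rcases hhit with ⟨h1, h2⟩ | ⟨h1, h2⟩
    · refine ⟨unitCirclePt (th M i + dl M), ?_, ?_⟩
      · apply subset_convexHull
        apply Set.mem_union_left
        exact ⟨th M i + dl M, ⟨le_refl _, le_refl _⟩, rfl⟩
      · apply subset_convexHull
        apply Set.mem_union_left
        refine ⟨th M i + dl M, ⟨?_, ?_⟩, rfl⟩
        · have := th_mono M hM h1; linarith
        · have := th_gap M hM (show i < b+1 by omega); linarith
    · refine ⟨unitCirclePt (th M i + dl M), ?_, ?_⟩
      · apply subset_convexHull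
        apply Set.mem_union_left
        exact ⟨th M i + dl M, ⟨le_refl _, le_refl _⟩, rfl⟩
      · apply subset_convexHull
        apply Set.mem_union_right
        refine ⟨th M i + dl M, ⟨?_, ?_⟩, rfl⟩
        · have := th_mono M hM h1; linarith
        · have := th_gap M hM (show i < d+1 by omega); linarith

end Params
lemma logb_le_3_sqrt {x : ℝ} (hx : 1 ≤ x) : logb 2 x ≤ 3 * Real.sqrt x := by
  have hx0 : (0:ℝ) < x := by linarith
  have hs0 : (0:ℝ) < Real.sqrt x := Real.sqrt_pos.mpr hx0
  have h1 : Real.log x ≤ 2 * Real.sqrt x := by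
    have h2 : Real.log (Real.sqrt x) ≤ Real.sqrt x - 1 := Real.log_le_sub_one_of_pos hs0
    have h3 : Real.log (Real.sqrt x) = Real.log x / 2 := Real.log_sqrt (le_of_lt hx0)
    linarith
  have hlog2 : (2:ℝ)/3 ≤ Real.log 2 := by
    have := Real.log_two_gt_d9; linarith
  rw [Real.logb, div_le_iff₀ (by linarith : (0:ℝ) < Real.log 2)]
  nlinarith [Real.sqrt_nonneg x]

section Graph

variable (n : ℕ)

def Qp : ℕ := n / (4 * Nat.log 2 n)
def Mp : ℕ := 4 * Qp n + 1

abbrev QuadT := Fin (Qp n) × Fin (Qp n) × Fin (Qp n - 2) × Fin (Qp n)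
abbrev Code := Fin (n - Mp n) → QuadT n

def qa (q : QuadT n) : ℕ := q.1
def qb (q : QuadT n) : ℕ := Qp n + q.2.1
def qc (q : QuadT n) : ℕ := 2 * Qp n + 2 + q.2.2.1
def qd (q : QuadT n) : ℕ := 3 * Qp n + q.2.2.2

lemma quad_bounds (q : QuadT n) :
    qa n q ≤ qb n q ∧ qb n q + 2 ≤ qc n q ∧ qc n q ≤ qd n q ∧ qd n q + 2 ≤ Mp n := by
  obtain ⟨x1, x2, x3, x4⟩ := q
  have h1 := x1.isLt
  have h2 := x2.isLt
  have h3 := x3.isLt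
  have h4 := x4.isLt
  unfold qa qb qc qd Mp
  simp only
  omega

lemma hM8 (hQ : 3 ≤ Qp n) : 8 ≤ Mp n := by unfold Mp; omega

def CTmap (x : Code n) (v : Fin n) : Set (ℝ × ℝ) :=
  if h : (v : ℕ) < Mp n then probeSet (Mp n) v
  else trapSet (Mp n) (qa n (x ⟨(v:ℕ) - Mp n, by omega⟩)) (qb n (x ⟨(v:ℕ) - Mp n, by omega⟩))
    (qc n (x ⟨(v:ℕ) - Mp n, by omega⟩)) (qd n (x ⟨(v:ℕ) - Mp n, by omega⟩))

def Gdef (x : Code n) : SimpleGraph (Fin n) where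
  Adj u v := u ≠ v ∧ (CTmap n x u ∩ CTmap n x v).Nonempty
  symm := by
    constructor
    intro u v ⟨h1, h2⟩
    exact ⟨h1.symm, by rwa [Set.inter_comm]⟩
  loopless := by constructor; intro u ⟨h1, _⟩; exact h1 rfl

lemma Gdef_isCTG (hQ : 3 ≤ Qp n) (x : Code n) : IsCircleTrapezoidGraph (Gdef n x) := by
  refine ⟨CTmap n x, ?_, ?_⟩
  · intro v
    unfold CTmap
    by_cases h : (v : ℕ) < Mp n
    · rw [dif_pos h]
      exact probe_isCT (Mp n) (hM8 n hQ) h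
    · rw [dif_neg h]
      obtain ⟨h1, h2, h3, h4⟩ := quad_bounds n (x ⟨(v:ℕ) - Mp n, by omega⟩)
      exact trap_isCT (Mp n) (hM8 n hQ) h1 h2 h3 h4
  · intro u v hne
    constructor
    · intro ⟨_, h2⟩; exact h2
    · intro h; exact ⟨hne, h⟩

/-- adjacency between probe i and coder j reads the code -/
lemma adj_probe (hQ : 3 ≤ Qp n) (hMn : Mp n ≤ n) (x : Code n) {i : ℕ} (hi : i < Mp n)
    (j : Fin (n - Mp n)) :
    (Gdef n x).Adj ⟨i, by omega⟩ ⟨Mp n + j, by omega⟩ ↔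
      ((qa n (x j) ≤ i ∧ i ≤ qb n (x j)) ∨ (qc n (x j) ≤ i ∧ i ≤ qd n (x j))) := by
  have hb := j.isLt
  have hCT1 : CTmap n x ⟨i, by omega⟩ = probeSet (Mp n) i := by
    unfold CTmap; rw [dif_pos hi]
  have hCT2 : CTmap n x ⟨Mp n + j, by omega⟩ = trapSet (Mp n) (qa n (x j)) (qb n (x j))
      (qc n (x j)) (qd n (x j)) := by
    unfold CTmap
    rw [dif_neg (by simp only [Fin.val_mk]; omega)]
    have harg : (⟨((⟨Mp n + ↑j, by omega⟩ : Fin n) : ℕ) - Mp n, by omega⟩ : Fin (n - Mp n)) = j :=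
      Fin.ext (by simp)
    rw [harg]
  obtain ⟨h1, h2, h3, h4⟩ := quad_bounds n (x j)
  constructor
  · intro ⟨_, hint⟩
    rw [hCT1, hCT2] at hint
    exact (probe_trap_inter (Mp n) (hM8 n hQ) h1 h2 h3 h4 hi).mp hint
  · intro hhit
    refine ⟨by apply Fin.ne_of_val_ne; simp; omega, ?_⟩
    rw [hCT1, hCT2]
    exact (probe_trap_inter (Mp n) (hM8 n hQ) h1 h2 h3 h4 hi).mpr hhit

/-- the code can be decoded from the labelled graph -/
lemma Gdef_inj (hQ : 3 ≤ Qp n) (hMn : Mp n ≤ n) : Function.Injective (Gdef n) := by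
  intro x y hxy
  funext j
  have key : ∀ i : ℕ, i < Mp n →
      (((qa n (x j) ≤ i ∧ i ≤ qb n (x j)) ∨ (qc n (x j) ≤ i ∧ i ≤ qd n (x j))) ↔
       ((qa n (y j) ≤ i ∧ i ≤ qb n (y j)) ∨ (qc n (y j) ≤ i ∧ i ≤ qd n (y j)))) := by
    intro i hi
    rw [← adj_probe n hQ hMn x hi j, ← adj_probe n hQ hMn y hi j, hxy]
  have bx1 : qa n (x j) < Qp n := (x j).1.isLt
  have bx2 : Qp n ≤ qb n (x j) ∧ qb n (x j) < 2 * Qp n := by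
    have := (x j).2.1.isLt; unfold qb; omega
  have bx3 : 2 * Qp n + 2 ≤ qc n (x j) ∧ qc n (x j) < 3 * Qp n := by
    have := (x j).2.2.1.isLt; unfold qc; omega
  have bx4 : 3 * Qp n ≤ qd n (x j) ∧ qd n (x j) < 4 * Qp n := by
    have := (x j).2.2.2.isLt; unfold qd; omega
  have by1 : qa n (y j) < Qp n := (y j).1.isLt
  have by2 : Qp n ≤ qb n (y j) ∧ qb n (y j) < 2 * Qp n := by
    have := (y j).2.1.isLt; unfold qb; omega
  have by3 : 2 * Qp n + 2 ≤ qc n (y j) ∧ qc n (y j) < 3 * Qp n := by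
    have := (y j).2.2.1.isLt; unfold qc; omega
  have by4 : 3 * Qp n ≤ qd n (y j) ∧ qd n (y j) < 4 * Qp n := by
    have := (y j).2.2.2.isLt; unfold qd; omega
  have hMQ : Mp n = 4 * Qp n + 1 := rfl
  have k1 := (key (qa n (x j)) (by omega)).mp (Or.inl ⟨le_refl _, by omega⟩)
  have k2 := (key (qb n (x j)) (by omega)).mp (Or.inl ⟨by omega, le_refl _⟩)
  have k3 := (key (qc n (x j)) (by omega)).mp (Or.inr ⟨le_refl _, by omega⟩)
  have k4 := (key (qd n (x j)) (by omega)).mp (Or.inr ⟨by omega, le_refl _⟩)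
  have k1' := (key (qa n (y j)) (by omega)).mpr (Or.inl ⟨le_refl _, by omega⟩)
  have k2' := (key (qb n (y j)) (by omega)).mpr (Or.inl ⟨by omega, le_refl _⟩)
  have k3' := (key (qc n (y j)) (by omega)).mpr (Or.inr ⟨le_refl _, by omega⟩)
  have k4' := (key (qd n (y j)) (by omega)).mpr (Or.inr ⟨by omega, le_refl _⟩)
  have e1 : qa n (x j) = qa n (y j) := by omega
  have e2 : qb n (x j) = qb n (y j) := by omega
  have e3 : qc n (x j) = qc n (y j) := by omega
  have e4 : qd n (x j) = qd n (y j) := by omega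
  have f1 : (x j).1 = (y j).1 := Fin.ext e1
  have f2 : (x j).2.1 = (y j).2.1 := Fin.ext (by unfold qb at e2; omega)
  have f3 : (x j).2.2.1 = (y j).2.2.1 := Fin.ext (by unfold qc at e3; omega)
  have f4 : (x j).2.2.2 = (y j).2.2.2 := Fin.ext (by unfold qd at e4; omega)
  exact Prod.ext f1 (Prod.ext f2 (Prod.ext f3 f4))

lemma card_code : Nat.card (Code n) = (Qp n * (Qp n * ((Qp n - 2) * Qp n))) ^ (n - Mp n) := by
  rw [Nat.card_eq_fintype_card, Fintype.card_fun]
  congr 1 <;> simp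

lemma card_bound (hQ : 3 ≤ Qp n) (hMn : Mp n ≤ n) :
    Nat.card (Code n) ≤ numIsoClasses n IsCircleTrapezoidGraph * (Nat.factorial n) := by
  classical
  set P := @IsCircleTrapezoidGraph n
  let St := {G : SimpleGraph (Fin n) // P G}
  let Qt := Quotient (graphIsoSetoid n P)
  let g : Code n → St := fun c => ⟨Gdef n c, Gdef_isCTG n hQ c⟩
  let F : Code n → Qt × Equiv.Perm (Fin n) := fun c =>
    (Quotient.mk _ (g c),
      (Classical.choice (Quotient.mk_out (s := graphIsoSetoid n P) (g c))).toEquiv)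
  have hinj : Function.Injective F := by
    intro c c' h
    have hq := congrArg Prod.fst h
    have he := congrArg Prod.snd h
    simp only [F] at hq he
    apply Gdef_inj n hQ hMn
    set e := Classical.choice (Quotient.mk_out (s := graphIsoSetoid n P) (g c)) with hedef
    set e' := Classical.choice (Quotient.mk_out (s := graphIsoSetoid n P) (g c')) with hedef'
    have hval : ((Quotient.mk _ (g c) : Qt).out).val = ((Quotient.mk _ (g c') : Qt).out).val := by
      rw [hq]
    ext u v
    have h1 : (Gdef n c).Adj u v ↔
        ((Quotient.mk _ (g c) : Qt).out).val.Adj (e.symm u) (e.symm v) := by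
      have := e.map_adj_iff (v := e.symm u) (w := e.symm v)
      simpa using this
    have h2 : (Gdef n c').Adj u v ↔
        ((Quotient.mk _ (g c') : Qt).out).val.Adj (e'.symm u) (e'.symm v) := by
      have := e'.map_adj_iff (v := e'.symm u) (w := e'.symm v)
      simpa using this
    have hsymm : ∀ w, e.symm w = e'.symm w := by
      intro w
      have : e.toEquiv.symm = e'.toEquiv.symm := by rw [he]
      exact congrFun (congrArg (fun t => t.toFun) (congrArg Equiv.symm he)) w
    have h3 : ∀ (x y : Fin n), ((Quotient.mk _ (g c) : Qt).out).val.Adj x y ↔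
        ((Quotient.mk _ (g c') : Qt).out).val.Adj x y := fun x y => by rw [hval]
    rw [h1, h2, ← hsymm u, ← hsymm v]
    exact h3 _ _
  calc Nat.card (Code n) ≤ Nat.card (Qt × Equiv.Perm (Fin n)) :=
        Nat.card_le_card_of_injective F hinj
    _ = numIsoClasses n P * Nat.factorial n := by
        rw [Nat.card_prod]
        congr 1
        rw [Nat.card_eq_fintype_card, Fintype.card_perm, Fintype.card_fin]

lemma nat_log_le_logb (hn : 1 ≤ n) : (Nat.log 2 n : ℝ) ≤ logb 2 n := by
  have h1 : (2:ℝ)^(Nat.log 2 n : ℕ) ≤ n := by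
    exact_mod_cast Nat.pow_log_le_self 2 (by omega)
  calc (Nat.log 2 n : ℝ) = logb 2 ((2:ℝ)^(Nat.log 2 n:ℕ)) := by
        rw [Real.logb_pow, Real.logb_self_eq_one (by norm_num)]; ring
    _ ≤ logb 2 n := Real.logb_le_logb_of_le (by norm_num) (by positivity) h1

lemma logb_le_nat_log (hn : 1 ≤ n) : logb 2 n ≤ (Nat.log 2 n : ℝ) + 1 := by
  have h1 : (n:ℝ) ≤ (2:ℝ)^(Nat.log 2 n + 1 : ℕ) := by
    exact_mod_cast le_of_lt (Nat.lt_pow_succ_log_self (by norm_num) n)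
  calc logb 2 n ≤ logb 2 ((2:ℝ)^(Nat.log 2 n + 1:ℕ)) :=
        Real.logb_le_logb_of_le (by norm_num) (by exact_mod_cast hn) h1
    _ = (Nat.log 2 n : ℝ) + 1 := by
        rw [Real.logb_pow, Real.logb_self_eq_one (by norm_num)]; push_cast; ring

lemma logb_mono30 (hn : 2^30 ≤ n) : (30:ℝ) ≤ logb 2 n := by
  calc (30:ℝ) = logb 2 ((2:ℝ)^(30:ℕ)) := by
        rw [Real.logb_pow, Real.logb_self_eq_one (by norm_num)]; ring
    _ ≤ logb 2 n := Real.logb_le_logb_of_le (by norm_num) (by positivity)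
        (by exact_mod_cast hn)

lemma basic_facts (hn : 2^30 ≤ n) :
    3 ≤ Qp n ∧ Mp n ≤ n := by
  have hn1 : 1 ≤ n := le_trans (by norm_num) hn
  have hL30 := logb_mono30 n hn
  set L := logb 2 n with hLdef
  set l := Nat.log 2 n with hldef
  have hlL := nat_log_le_logb n hn1
  have hLl := logb_le_nat_log n hn1
  have hl29 : 29 ≤ l := by
    have : (29:ℝ) ≤ (l:ℝ) := by linarith
    exact_mod_cast this
  have hsq : Real.sqrt n * Real.sqrt n = n := Real.mul_self_sqrt (by positivity)
  have hsq36 : (36:ℝ) ≤ Real.sqrt n := by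
    rw [show (36:ℝ) = Real.sqrt 1296 by
      rw [show (1296:ℝ) = 36^2 by norm_num, Real.sqrt_sq (by norm_num)]]
    apply Real.sqrt_le_sqrt
    have : (1296:ℕ) ≤ n := le_trans (by norm_num) hn
    exact_mod_cast this
  have hLsqrt : L ≤ 3 * Real.sqrt n := logb_le_3_sqrt (by exact_mod_cast hn1)
  have h12l : 12 * l ≤ n := by
    have hr : (12 * l : ℝ) ≤ n := by nlinarith
    exact_mod_cast hr
  have hQ3 : 3 ≤ Qp n := by
    unfold Qp
    rw [Nat.le_div_iff_mul_le (by omega)]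
    omega
  refine ⟨hQ3, ?_⟩
  -- Mp n ≤ n
  have hqe : Qp n = n / (4 * l) := rfl
  have hQl : 4 * l * Qp n ≤ n := by
    have h1 := Nat.div_mul_le_self n (4 * l)
    rw [← hqe] at h1
    calc 4 * l * Qp n = Qp n * (4 * l) := by ring
      _ ≤ n := h1
  have hMr : ((Mp n : ℕ):ℝ) * L ≤ 3 * n := by
    have h1 : (4 * l * Qp n : ℝ) ≤ n := by exact_mod_cast hQl
    have h2 : (Mp n : ℝ) = 4 * (Qp n : ℝ) + 1 := by unfold Mp; push_cast; ring
    have h3 : L ≤ 2 * l := by linarith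
    have h4 : (0:ℝ) ≤ (Qp n : ℝ) := by positivity
    have h5 : L ≤ (n:ℝ) := by nlinarith
    have h6 : (0:ℝ) ≤ L := by linarith
    nlinarith
  have : (Mp n : ℝ) ≤ (n:ℝ) := by nlinarith
  exact_mod_cast this

set_option maxHeartbeats 2000000 in
lemma final_estimate (hn : 2^30 ≤ n) (T : ℕ)
    (hT : (Qp n * (Qp n * ((Qp n - 2) * Qp n))) ^ (n - Mp n) ≤ T * Nat.factorial n) :
    logb 2 (T:ℝ) ≥ 3 * (n:ℝ) * logb 2 n - 32 * (n:ℝ) * logb 2 (logb 2 n) := by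
  obtain ⟨hQ3, hMn⟩ := basic_facts n hn
  have hn1 : 1 ≤ n := le_trans (by norm_num) hn
  have hL30 := logb_mono30 n hn
  set L := logb 2 n with hLdef
  set l := Nat.log 2 n with hldef
  have hlL := nat_log_le_logb n hn1
  have hLl := logb_le_nat_log n hn1
  have hl29 : 29 ≤ l := by
    have : (29:ℝ) ≤ (l:ℝ) := by linarith
    exact_mod_cast this
  set Q := Qp n with hQdef
  set R := Q - 2 with hRdef
  set M := Mp n with hMdef
  have hR1 : 1 ≤ R := by omega
  have hRQ : (Q:ℝ) = (R:ℝ) + 2 := by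
    have : Q = R + 2 := by omega
    exact_mod_cast this
  -- bounds on Q and M
  have hqe : Q = n / (4 * l) := rfl
  have hQl : 4 * l * Q ≤ n := by
    have h1 := Nat.div_mul_le_self n (4 * l)
    rw [← hqe] at h1
    calc 4 * l * Q = Q * (4 * l) := by ring
      _ ≤ n := h1
  have hQu : n < 4 * l * Q + 4 * l := by
    have h0 : 0 < 4 * l := by omega
    have h2 := Nat.div_add_mod n (4 * l)
    rw [← hqe] at h2
    have h3 := Nat.mod_lt n h0
    omega
  have hMr : (M:ℝ) * L ≤ 3 * n := by
    have h1 : (4 * l * Q : ℝ) ≤ n := by exact_mod_cast hQl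
    have h2 : (M : ℝ) = 4 * (Q : ℝ) + 1 := by rw [hMdef]; unfold Mp; push_cast; ring
    have h3 : L ≤ 2 * l := by linarith
    have h4 : (0:ℝ) ≤ (Q : ℝ) := by positivity
    have hsq : Real.sqrt n * Real.sqrt n = n := Real.mul_self_sqrt (by positivity)
    have hsq36 : (36:ℝ) ≤ Real.sqrt n := by
      rw [show (36:ℝ) = Real.sqrt 1296 by
        rw [show (1296:ℝ) = 36^2 by norm_num, Real.sqrt_sq (by norm_num)]]
      apply Real.sqrt_le_sqrt
      have : (1296:ℕ) ≤ n := le_trans (by norm_num) hn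
      exact_mod_cast this
    have hLsqrt : L ≤ 3 * Real.sqrt n := logb_le_3_sqrt (by exact_mod_cast hn1)
    have h5 : L ≤ (n:ℝ) := by nlinarith
    nlinarith
  -- n ≤ 16 L R
  have hnLR : (n:ℝ) ≤ 16 * L * R := by
    have h1 : (n:ℝ) < 4 * l * Q + 4 * l := by exact_mod_cast hQu
    have h2 : (l:ℝ) ≤ L := hlL
    have hR0 : (1:ℝ) ≤ (R:ℝ) := by exact_mod_cast hR1
    have h4 : (0:ℝ) ≤ (l:ℝ) := by positivity
    nlinarith
  -- logb bounds
  have hx1 : 1 ≤ logb 2 L := by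
    calc (1:ℝ) = logb 2 2 := (Real.logb_self_eq_one (by norm_num)).symm
      _ ≤ logb 2 L := Real.logb_le_logb_of_le (by norm_num) (by norm_num) (by linarith)
  set x := logb 2 L with hxdef
  have hxL : x ≤ (3/5) * L := by
    have h1 : x ≤ 3 * Real.sqrt L := logb_le_3_sqrt (by linarith)
    have h2 : (5:ℝ) ≤ Real.sqrt L := by
      rw [show (5:ℝ) = Real.sqrt 25 by
        rw [show (25:ℝ) = 5^2 by norm_num, Real.sqrt_sq (by norm_num)]]
      exact Real.sqrt_le_sqrt (by linarith)
    have h3 : Real.sqrt L * Real.sqrt L = L := Real.mul_self_sqrt (by linarith)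
    nlinarith
  have hA : 0 ≤ L - 4 - x := by linarith
  have hlogR : logb 2 (R:ℝ) ≥ L - 4 - x := by
    have hL0 : (0:ℝ) < L := by linarith
    have hq : (n:ℝ)/(16*L) ≤ (R:ℝ) := by
      rw [div_le_iff₀ (by linarith)]
      nlinarith
    have hpos : (0:ℝ) < (n:ℝ)/(16*L) := by positivity
    have h1 : logb 2 ((n:ℝ)/(16*L)) ≤ logb 2 (R:ℝ) :=
      Real.logb_le_logb_of_le (by norm_num) hpos hq
    have h2 : logb 2 ((n:ℝ)/(16*L)) = L - (logb 2 16 + logb 2 L) := by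
      rw [Real.logb_div (by positivity) (by positivity), Real.logb_mul (by norm_num)
        (by linarith)]
    have h3 : logb 2 (16:ℝ) = 4 := by
      rw [show (16:ℝ) = 2^(4:ℕ) by norm_num, Real.logb_pow,
        Real.logb_self_eq_one (by norm_num)]
      norm_num
    rw [h2, h3] at h1
    linarith
  -- from the counting inequality
  set K := Q * (Q * (R * Q)) with hKdef
  have hK4 : R^4 ≤ K := by
    have hRQn : R ≤ Q := by omega
    calc R^4 = R * (R * (R * R)) := by ring
      _ ≤ Q * (Q * (R * Q)) := by
          apply Nat.mul_le_mul hRQn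
          apply Nat.mul_le_mul hRQn
          apply Nat.mul_le_mul (le_refl R) hRQn
  have hK1 : 1 ≤ K := le_trans (Nat.one_le_pow _ _ (by omega)) hK4
  have hT1 : 1 ≤ T := by
    rcases Nat.eq_zero_or_pos T with h | h
    · exfalso
      rw [h, zero_mul] at hT
      have : 1 ≤ K ^ (n - M) := Nat.one_le_pow _ _ (by omega)
      omega
    · exact h
  -- real versions
  have hTr : ((K:ℝ)) ^ (n - M) ≤ (T:ℝ) * (Nat.factorial n : ℝ) := by
    exact_mod_cast hT
  have hKr1 : (1:ℝ) ≤ (K:ℝ) := by exact_mod_cast hK1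
  have hfr1 : (1:ℝ) ≤ (Nat.factorial n : ℝ) := by
    exact_mod_cast Nat.one_le_iff_ne_zero.mpr (Nat.factorial_ne_zero n)
  have hTr1 : (1:ℝ) ≤ (T:ℝ) := by exact_mod_cast hT1
  have hlogT : ((n - M : ℕ):ℝ) * logb 2 (K:ℝ) ≤ logb 2 (T:ℝ) + logb 2 (Nat.factorial n : ℝ) := by
    have hKpow : (0:ℝ) < (K:ℝ) ^ (n - M) := pow_pos (by linarith) _
    have h1 : logb 2 ((K:ℝ) ^ (n - M)) ≤ logb 2 ((T:ℝ) * (Nat.factorial n:ℝ)) :=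
      Real.logb_le_logb_of_le one_lt_two hKpow hTr
    rw [Real.logb_pow] at h1
    rw [Real.logb_mul (by linarith) (by linarith)] at h1
    exact h1
  have hlogfact : logb 2 (Nat.factorial n : ℝ) ≤ (n:ℝ) * L := by
    have h1 : (Nat.factorial n : ℝ) ≤ ((n:ℝ))^(n:ℕ) := by
      exact_mod_cast Nat.factorial_le_pow n
    calc logb 2 (Nat.factorial n : ℝ) ≤ logb 2 ((n:ℝ)^(n:ℕ)) :=
          Real.logb_le_logb_of_le (by norm_num) (by positivity) h1
      _ = (n:ℝ) * L := by rw [Real.logb_pow]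
  have hlogK : 4 * logb 2 (R:ℝ) ≤ logb 2 (K:ℝ) := by
    have h1 : ((R:ℝ))^(4:ℕ) ≤ (K:ℝ) := by exact_mod_cast hK4
    have hR0 : (0:ℝ) < (R:ℝ) := by exact_mod_cast hR1
    calc 4 * logb 2 (R:ℝ) = logb 2 ((R:ℝ)^(4:ℕ)) := by rw [Real.logb_pow]; norm_num
      _ ≤ logb 2 (K:ℝ) := Real.logb_le_logb_of_le (by norm_num) (by positivity) h1
  -- put it together
  have hnM : ((n - M : ℕ):ℝ) = (n:ℝ) - (M:ℝ) := by
    rw [Nat.cast_sub hMn]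
  have hnm0 : (0:ℝ) ≤ (n:ℝ) - (M:ℝ) := by
    rw [← hnM]; positivity
  have hM0 : (0:ℝ) ≤ (M:ℝ) := by positivity
  have hlogR0 : (0:ℝ) ≤ logb 2 (R:ℝ) := Real.logb_nonneg (by norm_num) (by exact_mod_cast hR1)
  have step1 : logb 2 (T:ℝ) ≥ ((n:ℝ) - (M:ℝ)) * (4 * logb 2 (R:ℝ)) - (n:ℝ) * L := by
    have h1 := mul_le_mul_of_nonneg_left hlogK hnm0
    rw [hnM] at hlogT
    nlinarith
  have step2 : ((n:ℝ) - (M:ℝ)) * (4 * logb 2 (R:ℝ)) ≥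
      ((n:ℝ) - (M:ℝ)) * (4 * (L - 4 - x)) := by
    apply mul_le_mul_of_nonneg_left _ hnm0
    linarith
  have step3 : ((n:ℝ) - (M:ℝ)) * (4 * (L - 4 - x)) ≥
      (n:ℝ) * (4 * (L - 4 - x)) - 12 * n := by
    have h1 : (M:ℝ) * (4 * (L - 4 - x)) ≤ 4 * ((M:ℝ) * L) := by nlinarith
    nlinarith
  have hn0 : (0:ℝ) ≤ (n:ℝ) := by positivity
  have step4 : (n:ℝ) * (4 * (L - 4 - x)) = 4 * ((n:ℝ)*L) - 16*n - 4*((n:ℝ)*x) := by ring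
  have final : logb 2 (T:ℝ) ≥ 3 * (n:ℝ) * L - 32 * (n:ℝ) * x := by
    have h28 : 28 * (n:ℝ) ≤ 28 * ((n:ℝ) * x) := by nlinarith
    nlinarith
  exact final

end Graph

end CTaux
end

/-- There is a constant `c > 0` such that for all sufficiently large `n`, the number `T_n` of
isomorphism classes of circle-trapezoid graphs on `n` vertices satisfies
`log₂ T_n ≥ 3 n log₂ n − c n log₂ log₂ n`. -/
theorem stmt2 :
    ∃ c : ℝ, 0 < c ∧ ∃ n₀ : ℕ, ∀ n : ℕ, n₀ ≤ n →
      Real.logb 2 (numIsoClasses n IsCircleTrapezoidGraph) ≥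
        3 * (n : ℝ) * Real.logb 2 n - c * n * Real.logb 2 (Real.logb 2 n) := by
  refine ⟨32, by norm_num, 2^30, ?_⟩
  intro n hn
  obtain ⟨hQ3, hMn⟩ := CTaux.basic_facts n hn
  have hcard := CTaux.card_bound n hQ3 hMn
  rw [CTaux.card_code n] at hcard
  exact CTaux.final_estimate n hn _ hcard

-- #print axioms check
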